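/- If a right R-module M has finite couniserial dimension, i.e., c.u.dim(M) = n for a natural number n, then M has finite uniform dimension and u.dim(M) ≤ n. -/

import Mathlib

universe u v w

/-- A module is *uniform* if it is nonzero and any two nonzero submodules intersect
nontrivially. -/
def IsUniformModule (R : Type u) [Ring R] (M : Type v) [AddCommGroup M] [Module R M] : Prop :=
  Nontrivial M ∧ ∀ N₁ N₂ : Submodule R M, N₁ ≠ ⊥ → N₂ ≠ ⊥ → N₁ ⊓ N₂ ≠ ⊥

/-- The classes `ζ_α`, defined by transfinite induction: `ζ_1` is the class of uniform
modules, and for `α > 1`, `M ∈ ζ_α` iff every nonzero submodule `N` of `M` with `N ≇ M`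
lies in `ζ_β` for some `β < α`. -/
def ModuleZeta (R : Type u) [Ring R] (α : Ordinal.{v}) (M : Type v) [AddCommGroup M]
    [Module R M] : Prop :=
  (α = 1 ∧ IsUniformModule R M) ∨
    (1 < α ∧ ∀ N : Submodule R M, N ≠ ⊥ → ¬ Nonempty (N ≃ₗ[R] M) →
      ∃ β, ∃ _ : β < α, ModuleZeta R β N)
termination_by α

/-- A module has couniserial dimension iff it lies in `ζ_α` for some ordinal `α`. -/
def HasCUDim (R : Type u) [Ring R] (M : Type v) [AddCommGroup M] [Module R M] : Prop :=
  ∃ α : Ordinal.{v}, ModuleZeta R α M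

open Classical in
/-- The couniserial dimension of a module: the least `α` with `M ∈ ζ_α`, with the
convention that the zero module has couniserial dimension `0`. -/
noncomputable def cuDim (R : Type u) [Ring R] (M : Type v) [AddCommGroup M] [Module R M] :
    Ordinal.{v} :=
  if Subsingleton M then 0 else sInf {α | ModuleZeta R α M}

/-- A submodule is *essential* if it meets every nonzero submodule nontrivially. -/
def IsEssentialSubmodule (R : Type u) [Ring R] {M : Type v} [AddCommGroup M] [Module R M]
    (N : Submodule R M) : Prop :=
  ∀ K : Submodule R M, K ≠ ⊥ → N ⊓ K ≠ ⊥

/-- A module is *indecomposable* if it is nonzero and is not an (internal) direct sum of two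
nonzero submodules. -/
def IsIndecomposableModule (R : Type u) [Ring R] (M : Type v) [AddCommGroup M]
    [Module R M] : Prop :=
  Nontrivial M ∧ ∀ A B : Submodule R M, IsCompl A B → A = ⊥ ∨ B = ⊥

/-- A module is *coHopfian* if it is not isomorphic to a proper submodule of itself. -/
def IsCoHopfianModule (R : Type u) [Ring R] (M : Type v) [AddCommGroup M] [Module R M] : Prop :=
  ∀ N : Submodule R M, Nonempty (M ≃ₗ[R] N) → N = ⊤

/-- A module is *fully coHopfian* if every submodule is coHopfian. -/
def IsFullyCoHopfianModule (R : Type u) [Ring R] (M : Type v) [AddCommGroup M]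
    [Module R M] : Prop :=
  ∀ N : Submodule R M, IsCoHopfianModule R N

/-- A module `N` has the *cancellation property* if `N ⊕ A ≅ N ⊕ B` implies `A ≅ B`. -/
def HasCancellation (R : Type u) [Ring R] (N : Type v) [AddCommGroup N] [Module R N] : Prop :=
  ∀ (A B : Type v) [AddCommGroup A] [Module R A] [AddCommGroup B] [Module R B],
    Nonempty ((N × A) ≃ₗ[R] (N × B)) → Nonempty (A ≃ₗ[R] B)

/-- A module is *Dedekind finite* if it is not isomorphic to a proper direct summand of
itself. -/
def IsDedekindFiniteModule (R : Type u) [Ring R] (M : Type v) [AddCommGroup M]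
    [Module R M] : Prop :=
  ∀ A B : Submodule R M, IsCompl A B → Nonempty (M ≃ₗ[R] A) → B = ⊥

/-- A ring is *semiprime* if it has no nonzero nilpotent two-sided ideal; equivalently,
`a R a = 0` implies `a = 0`. -/
def IsSemiprimeRing (R : Type u) [Ring R] : Prop :=
  ∀ a : R, (∀ x : R, a * x * a = 0) → a = 0

/-- An ideal is an *annihilator ideal* if it is the annihilator of a subset of the ring. -/
def IsAnnihilatorIdeal (R : Type u) [Ring R] (I : Ideal R) : Prop :=
  ∃ S : Set R, (I : Set R) = {x : R | ∀ s ∈ S, x * s = 0}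

/-- A module has *uniform dimension `n`* if it contains `n` independent uniform submodules
whose direct sum is essential. -/
def HasFiniteUniformDim (R : Type u) [Ring R] (M : Type v) [AddCommGroup M] [Module R M]
    (n : ℕ) : Prop :=
  ∃ U : Fin n → Submodule R M, iSupIndep U ∧ (∀ i, IsUniformModule R (U i)) ∧
    IsEssentialSubmodule R (⨆ i, U i)

/-- A ring is *Goldie* if it has the ascending chain condition on annihilator ideals and
finite uniform dimension as a module over itself. -/
def IsGoldieRing (R : Type u) [Ring R] : Prop :=
  (∀ f : ℕ → Ideal R, (∀ n, IsAnnihilatorIdeal R (f n)) → Monotone f →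
      ∃ n, ∀ k, n ≤ k → f k = f n) ∧
    ∃ n : ℕ, HasFiniteUniformDim R R n

namespace CU

variable {R : Type u} [Ring R] {M : Type v} [AddCommGroup M] [Module R M]

/-- `A` is an essential submodule of `B` (relative, inside the lattice of submodules of `M`). -/
def EssIn (A B : Submodule R M) : Prop :=
  A ≤ B ∧ ∀ K : Submodule R M, K ≤ B → K ≠ ⊥ → A ⊓ K ≠ ⊥

/-- `P` is a nonzero uniform member of the lattice of submodules of `M`. -/
def UnifIn (P : Submodule R M) : Prop :=
  P ≠ ⊥ ∧ ∀ A B : Submodule R M, A ≤ P → B ≤ P → A ≠ ⊥ → B ≠ ⊥ → A ⊓ B ≠ ⊥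

theorem EssIn.refl (A : Submodule R M) : EssIn A A :=
  ⟨le_rfl, fun K hK hKne => by rwa [inf_eq_right.2 hK]⟩

theorem EssIn.trans {A B C : Submodule R M} (h1 : EssIn A B) (h2 : EssIn B C) : EssIn A C := by
  refine ⟨h1.1.trans h2.1, fun K hK hKne => ?_⟩
  have h3 : B ⊓ K ≠ ⊥ := h2.2 K hK hKne
  have h4 : A ⊓ (B ⊓ K) ≠ ⊥ := h1.2 _ inf_le_left h3
  intro h5
  refine h4 (le_bot_iff.1 ?_)
  rw [← h5]
  exact inf_le_inf_left A inf_le_right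

theorem EssIn.mono_up {A B C : Submodule R M} (h : EssIn A C) (hAB : A ≤ B) (hBC : B ≤ C) :
    EssIn B C := by
  refine ⟨hBC, fun K hK hKne h5 => h.2 K hK hKne (le_bot_iff.1 ?_)⟩
  exact h5 ▸ inf_le_inf_right K hAB

theorem EssIn.inf {A C B : Submodule R M} (h : EssIn A C) (hB : B ≤ C) : EssIn (A ⊓ B) B := by
  refine ⟨inf_le_right, fun K hK hKne h5 => h.2 K (hK.trans hB) hKne (le_bot_iff.1 ?_)⟩
  rw [← h5, inf_assoc]
  exact inf_le_inf_left A (le_inf hK le_rfl)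

/-- key modular-lattice step: if `A` is essential in `B` and `B ⊓ D = ⊥` then
`A ⊔ D` is essential in `B ⊔ D`. -/
theorem essIn_sup_right {A B D : Submodule R M} (h : EssIn A B) (hBD : B ⊓ D = ⊥) :
    EssIn (A ⊔ D) (B ⊔ D) := by
  refine ⟨sup_le_sup_right h.1 D, fun K hK hKne hcon => ?_⟩
  have hKD : K ⊓ D = ⊥ := by
    rw [← le_bot_iff, ← hcon]
    exact le_inf (inf_le_right.trans le_sup_right) inf_le_left
  have hb : B ⊓ (D ⊔ K) ≠ ⊥ := by
    intro hb0
    have h2 : (D ⊔ K) ⊓ (D ⊔ B) = D := by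
      have := inf_sup_assoc_of_le (x := D ⊔ K) B (le_sup_left : D ≤ D ⊔ K)
      rw [inf_comm (D ⊔ K) B, hb0, bot_sup_eq, sup_comm B D] at this
      exact this.symm
    have hKle : K ≤ D := by
      have hx : K ≤ (D ⊔ K) ⊓ (D ⊔ B) := le_inf le_sup_right (hK.trans_eq (sup_comm B D))
      rwa [h2] at hx
    exact hKne (by rw [← hKD, inf_eq_left.2 hKle])
  have hc : A ⊓ (D ⊔ K) ≠ ⊥ := by
    have h5 : A ⊓ (B ⊓ (D ⊔ K)) ≠ ⊥ := h.2 _ inf_le_left hb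
    intro hc0
    refine h5 (le_bot_iff.1 ?_)
    rw [← hc0]
    exact inf_le_inf_left A inf_le_right
  -- step iv
  have h4 : (A ⊔ D) ⊓ (D ⊔ K) = D := by
    have hy := inf_sup_assoc_of_le (x := A ⊔ D) K (le_sup_right : D ≤ A ⊔ D)
    rw [hcon, bot_sup_eq, sup_comm K D] at hy
    exact hy.symm
  have : A ⊓ (D ⊔ K) ≤ B ⊓ D := by
    refine le_inf (inf_le_left.trans h.1) ?_
    calc A ⊓ (D ⊔ K) ≤ (A ⊔ D) ⊓ (D ⊔ K) := inf_le_inf_right _ le_sup_left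
    _ = D := h4
  exact hc (le_bot_iff.1 (this.trans_eq hBD))

theorem essIn_sup_sup {A B C D : Submodule R M} (h1 : EssIn A B) (h2 : EssIn C D)
    (hBD : B ⊓ D = ⊥) : EssIn (A ⊔ C) (B ⊔ D) := by
  have hDA : D ⊓ A = ⊥ := by
    rw [← le_bot_iff, ← hBD, inf_comm B D]
    exact inf_le_inf_left D h1.1
  have step1 : EssIn (A ⊔ D) (B ⊔ D) := essIn_sup_right h1 hBD
  have step2 : EssIn (C ⊔ A) (D ⊔ A) := essIn_sup_right h2 hDA
  rw [sup_comm C A, sup_comm D A] at step2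
  exact step2.trans step1

theorem disjoint_sup_kernel {A C K : Submodule R M} (hAC : A ⊓ C = ⊥)
    (hcon : (A ⊔ C) ⊓ K = ⊥) : A ⊓ (C ⊔ K) = ⊥ := by
  rw [eq_bot_iff]
  rintro x ⟨hxA, hxCK⟩
  obtain ⟨c, hc, k, hk, hck⟩ := Submodule.mem_sup.1 hxCK
  have hkm : k ∈ (A ⊔ C) ⊓ K := by
    constructor
    · have : k = x - c := by rw [← hck]; abel
      rw [this]
      exact Submodule.sub_mem _ (Submodule.mem_sup_left hxA) (Submodule.mem_sup_right hc)
    · exact hk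
  rw [hcon] at hkm
  have hk0 : k = 0 := hkm
  have : x ∈ A ⊓ C := ⟨hxA, by rw [hk0, add_zero] at hck; exact hck ▸ hc⟩
  rw [hAC] at this
  exact this

/-- Existence of relative complements with essential join (Zorn). -/
theorem exists_compl_within {amb A B₀ : Submodule R M} (hA : A ≤ amb) (hB : B₀ ≤ amb)
    (hd : A ⊓ B₀ = ⊥) :
    ∃ C : Submodule R M, B₀ ≤ C ∧ C ≤ amb ∧ A ⊓ C = ⊥ ∧ EssIn (A ⊔ C) amb := by
  set S : Set (Submodule R M) := {C | B₀ ≤ C ∧ C ≤ amb ∧ A ⊓ C = ⊥} with hS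
  have hzorn := zorn_le_nonempty₀ S ?_ B₀ ⟨le_rfl, hB, hd⟩
  · obtain ⟨C, hBC, hCmax⟩ := hzorn
    obtain ⟨⟨hB₀C, hCamb, hAC⟩, hmax⟩ := hCmax
    refine ⟨C, hB₀C, hCamb, hAC, sup_le hA hCamb, fun K hK hKne hcon => ?_⟩
    have hmem : C ⊔ K ∈ S := ⟨hB₀C.trans le_sup_left, sup_le hCamb hK,
      disjoint_sup_kernel hAC hcon⟩
    have hKC : K ≤ C := le_sup_right.trans (hmax hmem le_sup_left)
    rw [inf_eq_right.2 (hKC.trans le_sup_right)] at hcon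
    exact hKne hcon
  · rintro c hcS hchain y hy
    refine ⟨sSup c, ⟨(hcS hy).1.trans (le_sSup hy), sSup_le fun z hz => (hcS hz).2.1, ?_⟩,
      fun z hz => le_sSup hz⟩
    rw [eq_bot_iff]
    rintro x ⟨hxA, hxS⟩
    obtain ⟨p, hp, hxp⟩ := (Submodule.mem_sSup_of_directed ⟨y, hy⟩ hchain.directedOn).1 hxS
    have : x ∈ A ⊓ p := ⟨hxA, hxp⟩
    rw [(hcS hp).2.2] at this
    exact this

theorem fin_iSup_succ {n : ℕ} (f : Fin (n + 1) → Submodule R M) :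
    ⨆ i, f i = f 0 ⊔ ⨆ i : Fin n, f i.succ := by
  apply le_antisymm
  · refine iSup_le fun i => ?_
    induction i using Fin.cases with
    | zero => exact le_sup_left
    | succ j => exact le_sup_of_le_right (le_iSup (fun i : Fin n => f i.succ) j)
  · exact sup_le (le_iSup f 0) (iSup_le fun i => le_iSup f i.succ)

theorem unifIn_iInf_ne_bot {P : Submodule R M} (hP : UnifIn P) :
    ∀ (t : ℕ) (T : Fin (t + 1) → Submodule R M), (∀ i, T i ≤ P) → (∀ i, T i ≠ ⊥) →
      ⨅ i, T i ≠ ⊥ := by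
  intro t
  induction t with
  | zero =>
    intro T hle hne
    have : ⨅ i, T i = T 0 := by
      apply le_antisymm (iInf_le T 0)
      exact le_iInf fun i => by rw [Fin.fin_one_eq_zero i]
    rw [this]; exact hne 0
  | succ t ih =>
    intro T hle hne
    have hdec : ⨅ i, T i = T 0 ⊓ ⨅ i : Fin (t + 1), T i.succ := by
      apply le_antisymm
      · exact le_inf (iInf_le T 0) (le_iInf fun i => iInf_le T i.succ)
      · refine le_iInf fun i => ?_
        induction i using Fin.cases with
        | zero => exact inf_le_left
        | succ j => exact inf_le_right.trans (iInf_le _ j)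
    rw [hdec]
    have h1 : ⨅ i : Fin (t + 1), T i.succ ≠ ⊥ := ih _ (fun i => hle i.succ) (fun i => hne i.succ)
    exact hP.2 _ _ (hle 0) ((iInf_le _ 0).trans (hle (Fin.succ 0))) (hne 0) h1

/-- In an independent family, the intersection of the "all-but-one" joins over a nonempty
finset is bounded by the join over the complement. -/
theorem iInf_allbutone_le {t : ℕ} {V : Fin t → Submodule R M} (hV : iSupIndep V) :
    ∀ (S : Finset (Fin t)), S.Nonempty →
      (⨅ i ∈ S, ⨆ (j) (_ : j ≠ i), V j) ≤ ⨆ j ∈ Sᶜ, V j := by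
  intro S hS
  induction hS using Finset.Nonempty.cons_induction with
  | singleton a =>
    rw [Finset.iInf_singleton]
    refine iSup₂_le fun j hj => ?_
    have : j ∈ ({a}ᶜ : Finset (Fin t)) := Finset.mem_compl.2 (by simpa using hj)
    exact le_iSup₂_of_le j this le_rfl
  | cons a S ha hSne ih =>
    have hcompl : Sᶜ = insert a ((Finset.cons a S ha)ᶜ) := by
      rw [Finset.cons_eq_insert, Finset.compl_insert, Finset.insert_erase (Finset.mem_compl.2 ha)]
    have hstep : (⨅ i ∈ Finset.cons a S ha, ⨆ (j) (_ : j ≠ i), V j)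
        ≤ (⨆ (j) (_ : j ≠ a), V j) ⊓ ⨆ j ∈ Sᶜ, V j := by
      rw [Finset.cons_eq_insert, Finset.iInf_insert]
      exact inf_le_inf_left _ ih
    refine hstep.trans ?_
    rw [hcompl, Finset.iSup_insert]
    set X := ⨆ j ∈ (Finset.cons a S ha)ᶜ, V j with hX
    have hXle : X ≤ ⨆ (j) (_ : j ≠ a), V j := by
      refine iSup₂_le fun j hj => ?_
      have hja : j ≠ a := by
        intro h; subst h
        exact (Finset.mem_compl.1 hj) (Finset.mem_cons_self _ _)
      exact le_iSup₂_of_le j hja le_rfl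
    have hmod := inf_sup_assoc_of_le (x := ⨆ (j) (_ : j ≠ a), V j) (V a) hXle
    have hVa : (⨆ (j) (_ : j ≠ a), V j) ⊓ V a = ⊥ := by
      rw [inf_comm]; exact disjoint_iff.1 (iSupIndep_def.1 hV a)
    rw [hVa, bot_sup_eq] at hmod
    exact hmod.ge

set_option maxHeartbeats 2000000 in
theorem goldie_bound : ∀ (n : ℕ) (C₀ : Submodule R M) (U : Fin n → Submodule R M),
    (∀ i, U i ≤ C₀) → iSupIndep U → (∀ i, UnifIn (U i)) → EssIn (⨆ i, U i) C₀ →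
    ∀ V : Fin (n + 1) → Submodule R M, (∀ i, V i ≤ C₀) → iSupIndep V → (∀ i, V i ≠ ⊥) →
    False := by
  intro n
  induction n with
  | zero =>
    intro C₀ U hUle hUind hUunif hE V hVle hVind hVne
    rw [iSup_of_empty U] at hE
    exact hE.2 (V 0) (hVle 0) (hVne 0) (by simp)
  | succ n ih =>
    intro C₀ U hUle hUind hUunif hE V hVle hVind hVne
    set U0 := U 0 with hU0
    set W := ⨆ i : Fin n, U i.succ with hW
    have hWle : W ≤ C₀ := iSup_le fun i => hUle i.succ
    have hU0W : U0 ⊓ W = ⊥ := by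
      have hd := iSupIndep_def.1 hUind 0
      refine disjoint_iff.1 (hd.mono_right ?_)
      exact iSup_le fun i => le_iSup₂_of_le i.succ (Fin.succ_ne_zero i) le_rfl
    have hEdec : (⨆ i, U i) = U0 ⊔ W := fin_iSup_succ U
    have hpig : ∃ i : Fin (n + 2), U0 ⊓ (⨆ (j) (_ : j ≠ i), V j) = ⊥ := by
      by_contra hcon
      push_neg at hcon
      set T : Fin (n + 2) → Submodule R M := fun i => U0 ⊓ (⨆ (j) (_ : j ≠ i), V j) with hT
      have h1 : ⨅ i, T i ≠ ⊥ :=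
        unifIn_iInf_ne_bot (hU0 ▸ hUunif 0) (n + 1) T (fun i => inf_le_left) hcon
      have h3 : (⨅ i, T i) ≤ ⨅ i ∈ (Finset.univ : Finset (Fin (n + 2))),
          ⨆ (j) (_ : j ≠ i), V j :=
        le_iInf fun i => le_iInf fun _ => (iInf_le T i).trans inf_le_right
      have h4 := iInf_allbutone_le hVind Finset.univ Finset.univ_nonempty
      rw [Finset.compl_univ] at h4
      exact h1 (le_bot_iff.1 (by simpa using h3.trans h4))
    obtain ⟨istar, histar⟩ := hpig
    have hV'ind : iSupIndep (V ∘ istar.succAbove) :=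
      hVind.comp (Fin.succAbove_right_injective)
    set V' : Fin (n + 1) → Submodule R M := V ∘ istar.succAbove with hV'
    have hV'ne : ∀ j, V' j ≠ ⊥ := fun j => hVne _
    have hV'le : ∀ j, V' j ≤ C₀ := fun j => hVle _
    have hV'J : (⨆ j, V' j) ≤ ⨆ (j) (_ : j ≠ istar), V j :=
      iSup_le fun j => le_iSup₂_of_le _ (Fin.succAbove_ne istar j) le_rfl
    have hDV : U0 ⊓ (⨆ j, V' j) = ⊥ :=
      le_bot_iff.1 ((inf_le_inf_left U0 hV'J).trans histar.le)
    obtain ⟨C, hWC, hCle, hU0C, hEssUC⟩ := exists_compl_within (hUle 0) hWle hU0W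
    have hWinC : EssIn W C := by
      have h5 : EssIn ((⨆ i, U i) ⊓ C) C := hE.inf hCle
      have h6 : (⨆ i, U i) ⊓ C = W := by
        rw [hEdec]
        have hm := inf_sup_assoc_of_le (x := C) U0 hWC
        rw [inf_comm C U0, hU0C, bot_sup_eq] at hm
        rw [inf_comm]
        exact hm.symm
      rwa [h6] at h5
    set P : Fin (n + 1) → Submodule R M := fun j => C ⊓ (U0 ⊔ V' j) with hP
    have hPle : ∀ j, P j ≤ C := fun j => inf_le_left
    have hPne : ∀ j, P j ≠ ⊥ := by
      intro j
      have h7 : (U0 ⊔ C) ⊓ V' j ≠ ⊥ := hEssUC.2 (V' j) (hV'le j) (hV'ne j)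
      rw [Submodule.ne_bot_iff] at h7 ⊢
      obtain ⟨v, ⟨hvUC, hvV⟩, hv0⟩ := h7
      obtain ⟨u, hu, c, hc, huc⟩ := Submodule.mem_sup.1 hvUC
      refine ⟨c, ⟨hc, ?_⟩, ?_⟩
      · have hcv : c = -u + v := by rw [← huc]; abel
        rw [hcv]
        exact Submodule.add_mem _ (Submodule.mem_sup_left (Submodule.neg_mem _ hu))
          (Submodule.mem_sup_right hvV)
      · intro hc0
        apply hv0
        rw [hc0, add_zero] at huc
        have hvm : v ∈ U0 ⊓ (⨆ j, V' j) := ⟨huc ▸ hu, (le_iSup V' j) hvV⟩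
        rw [hDV] at hvm
        exact hvm
    have hPind : iSupIndep P := by
      rw [iSupIndep_def]
      intro i
      rw [disjoint_iff]
      have hYle : (⨆ (j) (_ : j ≠ i), P j) ≤ U0 ⊔ ⨆ (j) (_ : j ≠ i), V' j := by
        refine iSup₂_le fun j hj => ?_
        refine inf_le_right.trans (sup_le_sup_left ?_ U0)
        exact le_iSup₂_of_le j hj le_rfl
      refine le_bot_iff.1 ((inf_le_inf_left _ hYle).trans ?_)
      intro x hx
      obtain ⟨hxP, hxY⟩ := Submodule.mem_inf.1 hx
      obtain ⟨hxC, hxUV⟩ := Submodule.mem_inf.1 hxP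
      obtain ⟨u, hu, v, hv, huv⟩ := Submodule.mem_sup.1 hxUV
      obtain ⟨d, hd, w, hw, hdw⟩ := Submodule.mem_sup.1 hxY
      have hud : u - d ∈ U0 ⊓ (⨆ j, V' j) := by
        constructor
        · exact Submodule.sub_mem _ hu hd
        · have h8 : u - d = w - v := by
            have : u + v = d + w := by rw [huv, hdw]
            have h9 : u - d = (u + v) - (d + v) := by abel
            rw [h9, this]; abel
          rw [h8]
          refine Submodule.sub_mem _ ?_ ((le_iSup V' i) hv)
          have hwle : (⨆ (j) (_ : j ≠ i), V' j) ≤ ⨆ j, V' j :=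
            iSup₂_le fun j _ => le_iSup V' j
          exact hwle hw
      rw [hDV] at hud
      have hud0 : u = d := by
        have := sub_eq_zero.1 (by exact_mod_cast hud)
        exact this
      have hvw : v = w := by
        have : u + v = d + w := by rw [huv, hdw]
        rw [hud0] at this
        exact add_left_cancel this
      have hv0 : v = 0 := by
        have hvm : v ∈ V' i ⊓ (⨆ (j) (_ : j ≠ i), V' j) := ⟨hv, hvw ▸ hw⟩
        rw [disjoint_iff.1 (iSupIndep_def.1 hV'ind i)] at hvm
        exact hvm
      have hxU0 : x ∈ U0 ⊓ C := by
        refine ⟨?_, hxC⟩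
        rw [← huv, hv0, add_zero]
        exact hu
      rw [hU0C] at hxU0
      exact hxU0
    exact ih C (fun i => U i.succ) (fun i => (le_iSup (fun i : Fin n => U i.succ) i).trans hWC)
      (hUind.comp (Fin.succ_injective n)) (fun i => hUunif i.succ) hWinC P hPle hPind hPne

theorem map_eq_bot_iff' {M' : Type v} [AddCommGroup M'] [Module R M'] (f : M →ₗ[R] M')
    (hf : Function.Injective f) (p : Submodule R M) : Submodule.map f p = ⊥ ↔ p = ⊥ := by
  constructor
  · intro h
    rw [eq_bot_iff]
    intro x hx
    have : f x ∈ Submodule.map f p := ⟨x, hx, rfl⟩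
    rw [h, Submodule.mem_bot] at this
    have hx0 : x = 0 := hf (by rw [this, map_zero])
    simp [hx0]
  · intro h; rw [h, Submodule.map_bot]

theorem unifIn_iff (P : Submodule R M) : IsUniformModule R ↥P ↔ UnifIn P := by
  constructor
  · rintro ⟨hnt, hu⟩
    refine ⟨Submodule.nontrivial_iff_ne_bot.1 hnt, fun A B hA hB hAne hBne => ?_⟩
    set X := Submodule.comap P.subtype A with hX
    set Y := Submodule.comap P.subtype B with hY
    have hmapX : Submodule.map P.subtype X = A := by
      rw [hX, Submodule.map_comap_subtype, inf_eq_right.2 hA]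
    have hmapY : Submodule.map P.subtype Y = B := by
      rw [hY, Submodule.map_comap_subtype, inf_eq_right.2 hB]
    have hXne : X ≠ ⊥ := fun h => hAne (by rw [← hmapX, h, Submodule.map_bot])
    have hYne : Y ≠ ⊥ := fun h => hBne (by rw [← hmapY, h, Submodule.map_bot])
    have h1 : X ⊓ Y ≠ ⊥ := hu X Y hXne hYne
    have h2 : Submodule.map P.subtype (X ⊓ Y) ≠ ⊥ := fun h =>
      h1 ((map_eq_bot_iff' P.subtype Subtype.val_injective _).1 h)
    intro h3
    apply h2
    rw [← le_bot_iff, ← h3, ← hmapX, ← hmapY]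
    exact le_inf (Submodule.map_mono inf_le_left) (Submodule.map_mono inf_le_right)
  · rintro ⟨hne, hu⟩
    refine ⟨Submodule.nontrivial_iff_ne_bot.2 hne, fun N₁ N₂ h1 h2 => ?_⟩
    have hA : Submodule.map P.subtype N₁ ≤ P := Submodule.map_subtype_le P N₁
    have hB : Submodule.map P.subtype N₂ ≤ P := Submodule.map_subtype_le P N₂
    have hAne : Submodule.map P.subtype N₁ ≠ ⊥ := fun h =>
      h1 ((map_eq_bot_iff' P.subtype Subtype.val_injective _).1 h)
    have hBne : Submodule.map P.subtype N₂ ≠ ⊥ := fun h =>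
      h2 ((map_eq_bot_iff' P.subtype Subtype.val_injective _).1 h)
    have h3 := hu _ _ hA hB hAne hBne
    rw [← Submodule.map_inf _ Subtype.val_injective] at h3
    exact fun h4 => h3 (by rw [h4, Submodule.map_bot])

theorem isUniformModule_congr {M' : Type v} [AddCommGroup M'] [Module R M'] (e : M ≃ₗ[R] M')
    (h : IsUniformModule R M) : IsUniformModule R M' := by
  obtain ⟨hnt, hu⟩ := h
  obtain ⟨x, y, hxy⟩ := hnt
  refine ⟨⟨e x, e y, fun hexy => hxy (e.injective hexy)⟩, fun N₁ N₂ h1 h2 => ?_⟩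
  set F := Submodule.orderIsoMapComap e with hF
  have hbot : ∀ X : Submodule R M', F.symm X = ⊥ ↔ X = ⊥ := by
    intro X
    constructor
    · intro hX
      have : F.symm X = F.symm ⊥ := by rw [hX, map_bot F.symm]
      exact F.symm.injective this
    · intro hX; rw [hX, map_bot F.symm]
  have h3 := hu (F.symm N₁) (F.symm N₂) (fun h => h1 ((hbot N₁).1 h)) (fun h => h2 ((hbot N₂).1 h))
  rw [← map_inf F.symm] at h3
  exact fun h4 => h3 ((hbot _).2 h4)

theorem zeta_congr (α : Ordinal.{v}) : ∀ {M₁ M₂ : Type v} [AddCommGroup M₁] [Module R M₁]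
    [AddCommGroup M₂] [Module R M₂] (_ : M₁ ≃ₗ[R] M₂),
    ModuleZeta R α M₁ → ModuleZeta R α M₂ := by
  induction α using Ordinal.induction with
  | _ α IH =>
  intro M₁ M₂ _ _ _ _ e h
  rw [ModuleZeta] at h ⊢
  rcases h with ⟨ha, hu⟩ | ⟨hα, hcl⟩
  · exact Or.inl ⟨ha, isUniformModule_congr e hu⟩
  · refine Or.inr ⟨hα, fun N' hN'ne hN'iso => ?_⟩
    set N : Submodule R M₁ := Submodule.comap (e : M₁ →ₗ[R] M₂) N' with hN
    have hmap : Submodule.map (e : M₁ →ₗ[R] M₂) N = N' := by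
      rw [hN, Submodule.map_comap_eq_of_surjective e.surjective]
    have eN : (↥N) ≃ₗ[R] ↥N' := (e.submoduleMap N).trans (LinearEquiv.ofEq _ _ hmap)
    have hNne : N ≠ ⊥ := by
      intro h0
      apply hN'ne
      rw [← hmap, h0, Submodule.map_bot]
    have hNiso : ¬ Nonempty (↥N ≃ₗ[R] M₁) := fun ⟨g⟩ =>
      hN'iso ⟨(eN.symm.trans g).trans e⟩
    obtain ⟨β, hβ, hzN⟩ := hcl N hNne hNiso
    exact ⟨β, hβ, IH β hβ eN hzN⟩

theorem zeta_one_le {α : Ordinal.{v}} (h : ModuleZeta R α M) : 1 ≤ α := by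
  rw [ModuleZeta] at h
  rcases h with ⟨rfl, _⟩ | ⟨hα, _⟩
  · exact le_rfl
  · exact hα.le

theorem cuDim_le_of_zeta {α : Ordinal.{v}} (h : ModuleZeta R α M) : cuDim R M ≤ α := by
  rw [cuDim]
  split
  · exact zero_le
  · exact csInf_le' h

theorem zeta_cuDim (h : HasCUDim R M) (hns : ¬ Subsingleton M) :
    ModuleZeta R (cuDim R M) M := by
  rw [cuDim, if_neg hns]
  exact csInf_mem h

theorem cuDim_congr {M' : Type v} [AddCommGroup M'] [Module R M'] (e : M ≃ₗ[R] M') :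
    cuDim R M = cuDim R M' := by
  have hset : {α : Ordinal.{v} | ModuleZeta R α M} = {α | ModuleZeta R α M'} := by
    ext α
    exact ⟨fun h => zeta_congr α e h, fun h => zeta_congr α e.symm h⟩
  rw [cuDim, cuDim, hset]
  rcases iff_iff_and_or_not_and_not.1 (e.toEquiv.subsingleton_congr) with ⟨h1, h2⟩ | ⟨h1, h2⟩
  · rw [if_pos h1, if_pos h2]
  · rw [if_neg h1, if_neg h2]

theorem hasCUDim_congr {M' : Type v} [AddCommGroup M'] [Module R M'] (e : M ≃ₗ[R] M')
    (h : HasCUDim R M) : HasCUDim R M' := by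
  obtain ⟨α, hα⟩ := h
  exact ⟨α, zeta_congr α e hα⟩

/-- F2: submodules inherit couniserial dimension, with value at most that of the module. -/
theorem zeta_submodule {α : Ordinal.{v}} (hz : ModuleZeta R α M) (Q : Submodule R M)
    (hQ : Q ≠ ⊥) : ∃ β ≤ α, ModuleZeta R β ↥Q := by
  have hz' := hz
  rw [ModuleZeta] at hz'
  rcases hz' with ⟨rfl, hu⟩ | ⟨hα, hcl⟩
  · refine ⟨1, le_rfl, ?_⟩
    rw [ModuleZeta]
    exact Or.inl ⟨rfl, (unifIn_iff Q).2 ⟨hQ, fun A B _ _ hA hB => hu.2 A B hA hB⟩⟩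
  · by_cases hiso : Nonempty (↥Q ≃ₗ[R] M)
    · obtain ⟨g⟩ := hiso
      exact ⟨α, le_rfl, zeta_congr α g.symm hz⟩
    · obtain ⟨β, hβ, hzQ⟩ := hcl Q hQ hiso
      exact ⟨β, hβ.le, hzQ⟩

theorem one_le_cuDim (h : HasCUDim R M) (hns : ¬ Subsingleton M) : 1 ≤ cuDim R M :=
  zeta_one_le (zeta_cuDim h hns)

theorem unifIn_map {M' : Type v} [AddCommGroup M'] [Module R M'] (f : M →ₗ[R] M')
    (hf : Function.Injective f) {K : Submodule R M} (hK : UnifIn K) :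
    UnifIn (Submodule.map f K) := by
  refine ⟨fun h => hK.1 ((map_eq_bot_iff' f hf K).1 h), fun A B hA hB hAne hBne => ?_⟩
  set A₀ := Submodule.comap f A ⊓ K with hA₀
  set B₀ := Submodule.comap f B ⊓ K with hB₀
  have hmapA : Submodule.map f A₀ = A := by
    rw [hA₀, Submodule.map_inf _ hf, Submodule.map_comap_eq]
    rw [inf_assoc, inf_eq_left.2 hA, inf_eq_right.2 (hA.trans (LinearMap.map_le_range))]
  have hmapB : Submodule.map f B₀ = B := by
    rw [hB₀, Submodule.map_inf _ hf, Submodule.map_comap_eq]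
    rw [inf_assoc, inf_eq_left.2 hB, inf_eq_right.2 (hB.trans (LinearMap.map_le_range))]
  have hA₀ne : A₀ ≠ ⊥ := fun h => hAne (by rw [← hmapA, h, Submodule.map_bot])
  have hB₀ne : B₀ ≠ ⊥ := fun h => hBne (by rw [← hmapB, h, Submodule.map_bot])
  have h1 := hK.2 A₀ B₀ inf_le_right inf_le_right hA₀ne hB₀ne
  intro h2
  apply h1
  rw [← (map_eq_bot_iff' f hf _), Submodule.map_inf _ hf, hmapA, hmapB, h2]

theorem unifIn_comap_subtype {Z P : Submodule R M} (hPZ : P ≤ Z) (hP : UnifIn P) :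
    UnifIn (Submodule.comap Z.subtype P) := by
  rw [← unifIn_iff] at hP ⊢
  exact isUniformModule_congr (Submodule.comapSubtypeEquivOfLe hPZ).symm hP

theorem essIn_map_subtype {C : Submodule R M} {X : Submodule R ↥C}
    (hX : IsEssentialSubmodule R X) : EssIn (Submodule.map C.subtype X) C := by
  refine ⟨Submodule.map_subtype_le C X, fun K hK hKne => ?_⟩
  set K' := Submodule.comap C.subtype K with hK'
  have hmapK : Submodule.map C.subtype K' = K := by
    rw [hK', Submodule.map_comap_subtype, inf_eq_right.2 hK]
  have hK'ne : K' ≠ ⊥ := fun h => hKne (by rw [← hmapK, h, Submodule.map_bot])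
  have h1 := hX K' hK'ne
  intro h2
  apply h1
  rw [← (map_eq_bot_iff' C.subtype Subtype.val_injective _), Submodule.map_inf _
    Subtype.val_injective, hmapK, h2]

theorem iSupIndep_map {M' : Type v} [AddCommGroup M'] [Module R M'] (f : M →ₗ[R] M')
    (hf : Function.Injective f) {ι : Type} {V : ι → Submodule R M} (hV : iSupIndep V) :
    iSupIndep fun i => Submodule.map f (V i) := by
  rw [iSupIndep_def]
  intro i
  rw [disjoint_iff]
  have h1 : (⨆ (j) (_ : j ≠ i), Submodule.map f (V j)) = Submodule.map f (⨆ (j) (_ : j ≠ i), V j) := by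
    rw [Submodule.map_iSup]
    exact iSup_congr fun j => by rw [Submodule.map_iSup]
  rw [h1, ← Submodule.map_inf _ hf, disjoint_iff.1 (iSupIndep_def.1 hV i), Submodule.map_bot]

theorem iSupIndep_comap_subtype {Z : Submodule R M} {ι : Type} {V : ι → Submodule R M}
    (hV : iSupIndep V) : iSupIndep fun i => Submodule.comap Z.subtype (V i) := by
  rw [iSupIndep_def]
  intro i
  rw [disjoint_iff, eq_bot_iff]
  have h1 : (⨆ (j) (_ : j ≠ i), Submodule.comap Z.subtype (V j))
      ≤ Submodule.comap Z.subtype (⨆ (j) (_ : j ≠ i), V j) := by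
    refine iSup₂_le fun j hj => Submodule.comap_mono ?_
    exact le_iSup₂_of_le j hj le_rfl
  refine (inf_le_inf_left _ h1).trans ?_
  rw [← Submodule.comap_inf, disjoint_iff.1 (iSupIndep_def.1 hV i)]
  intro x hx
  have : (x : M) ∈ (⊥ : Submodule R M) := hx
  rw [Submodule.mem_bot] at this
  rw [Submodule.mem_bot]
  exact Subtype.ext this

theorem fin_iSup_last {n : ℕ} (f : Fin (n + 1) → Submodule R M) :
    ⨆ i, f i = (⨆ i : Fin n, f i.castSucc) ⊔ f (Fin.last n) := by
  apply le_antisymm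
  · refine iSup_le fun i => ?_
    induction i using Fin.lastCases with
    | last => exact le_sup_right
    | cast j => exact le_sup_of_le_left (le_iSup (fun i : Fin n => f i.castSucc) j)
  · exact sup_le (iSup_le fun i => le_iSup f i.castSucc) (le_iSup f (Fin.last n))

theorem eq_bot_of_subsingleton' (hs : Subsingleton M) (p : Submodule R M) : p = ⊥ := by
  rw [eq_bot_iff]
  intro x _
  rw [Submodule.mem_bot, Subsingleton.elim x 0]

/-- Every nonzero submodule of a module with couniserial dimension contains a
uniform submodule. -/
theorem exists_unifIn (h : HasCUDim R M) (P : Submodule R M) (hP : P ≠ ⊥) :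
    ∃ A : Submodule R M, A ≤ P ∧ A ≠ ⊥ ∧ UnifIn A := by
  have hns : ¬ Subsingleton M := fun hs => hP (eq_bot_of_subsingleton' hs P)
  have hzM := zeta_cuDim h hns
  have hQz : ∀ Q : Submodule R M, Q ≠ ⊥ → HasCUDim R ↥Q := by
    intro Q hQ
    obtain ⟨β, _, hβ⟩ := zeta_submodule hzM Q hQ
    exact ⟨β, hβ⟩
  set S : Set Ordinal.{v} := (fun Q : Submodule R M => cuDim R ↥Q) '' {Q | Q ≤ P ∧ Q ≠ ⊥}
    with hS
  have hSne : S.Nonempty := ⟨_, ⟨P, ⟨le_rfl, hP⟩, rfl⟩⟩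
  obtain ⟨Q₀, ⟨hQ₀P, hQ₀ne⟩, hQ₀dim⟩ := csInf_mem hSne
  have hQ₀nt : Nontrivial ↥Q₀ := Submodule.nontrivial_iff_ne_bot.2 hQ₀ne
  have hQ₀ns : ¬ Subsingleton ↥Q₀ := not_subsingleton_iff_nontrivial.2 hQ₀nt
  have hzQ₀ := zeta_cuDim (hQz Q₀ hQ₀ne) hQ₀ns
  by_cases huni : IsUniformModule R ↥Q₀
  · exact ⟨Q₀, hQ₀P, hQ₀ne, (unifIn_iff Q₀).1 huni⟩
  exfalso
  have hz' := hzQ₀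
  rw [ModuleZeta] at hz'
  rcases hz' with ⟨_, hu⟩ | ⟨hα, hcl⟩
  · exact huni hu
  have hvs : ∀ X : Submodule R ↥Q₀, X ≠ ⊥ → Nonempty (↥X ≃ₗ[R] ↥Q₀) := by
    intro X hX
    by_contra hX'
    obtain ⟨β, hβ, hzX⟩ := hcl X hX hX'
    set X' := Submodule.map Q₀.subtype X with hX'def
    have hX'P : X' ≤ P := (Submodule.map_subtype_le Q₀ X).trans hQ₀P
    have hX'ne : X' ≠ ⊥ := fun h0 => hX ((map_eq_bot_iff' _ Subtype.val_injective _).1 h0)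
    have hX'iso : (↥X) ≃ₗ[R] ↥X' := Submodule.equivMapOfInjective _ Subtype.val_injective X
    have h5 : cuDim R ↥X' < sInf S :=
      calc cuDim R ↥X' = cuDim R ↥X := (cuDim_congr hX'iso).symm
        _ ≤ β := cuDim_le_of_zeta hzX
        _ < cuDim R ↥Q₀ := hβ
        _ = sInf S := hQ₀dim
    exact absurd (csInf_le' (show cuDim R ↥X' ∈ S from ⟨X', ⟨hX'P, hX'ne⟩, rfl⟩))
      (not_le.2 h5)
  have hfin : Module.Finite R ↥Q₀ := by
    obtain ⟨y, hy⟩ := exists_ne (0 : ↥Q₀)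
    have hspan : Submodule.span R {y} ≠ ⊥ := by
      simpa [Submodule.span_singleton_eq_bot] using hy
    obtain ⟨g⟩ := hvs _ hspan
    have hfg : Module.Finite R ↥(Submodule.span R {y}) :=
      Module.Finite.iff_fg.2 (Submodule.fg_span_singleton y)
    exact Module.Finite.equiv g
  have hnoe : IsNoetherian R ↥Q₀ := by
    rw [isNoetherian_def]
    intro s
    by_cases hs : s = ⊥
    · rw [hs]; exact Submodule.fg_bot
    · obtain ⟨g⟩ := hvs s hs
      rw [← Module.Finite.iff_fg]
      exact Module.Finite.equiv g.symm
  have hnonu : ∀ X : Submodule R ↥Q₀, X ≠ ⊥ →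
      ∃ q : Submodule R ↥Q₀ × Submodule R ↥Q₀, q.1 ≤ X ∧ q.2 ≤ X ∧ q.1 ≠ ⊥ ∧ q.2 ≠ ⊥ ∧
        q.1 ⊓ q.2 = ⊥ := by
    intro X hX
    obtain ⟨g⟩ := hvs X hX
    have hnu : ¬ UnifIn X := fun hux => huni (isUniformModule_congr g ((unifIn_iff X).2 hux))
    unfold UnifIn at hnu
    rw [not_and] at hnu
    have h6 := hnu hX
    push_neg at h6
    obtain ⟨A, B, hA, hB, hAne, hBne, hAB⟩ := h6
    exact ⟨(A, B), hA, hB, hAne, hBne, hAB⟩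
  -- build a strictly increasing chain, contradicting Noetherianity
  have htop : (⊤ : Submodule R ↥Q₀) ≠ ⊥ := by
    intro h0
    obtain ⟨x, y, hxy⟩ := hQ₀nt
    apply hxy
    have hx : x ∈ (⊥ : Submodule R ↥Q₀) := h0 ▸ Submodule.mem_top
    have hy : y ∈ (⊥ : Submodule R ↥Q₀) := h0 ▸ Submodule.mem_top
    rw [Submodule.mem_bot] at hx hy
    rw [hx, hy]
  classical
  set f : ℕ → Submodule R ↥Q₀ × Submodule R ↥Q₀ := fun n => Nat.rec
    (Classical.choose (hnonu ⊤ htop))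
    (fun _ p => if h : p.2 ≠ ⊥ then Classical.choose (hnonu p.2 h) else p) n with hf
  have hstep : ∀ n (hb : (f n).2 ≠ ⊥), f (n + 1) = Classical.choose (hnonu (f n).2 hb) :=
    fun n hb => dif_pos hb
  have hinv : ∀ n, (f n).1 ≠ ⊥ ∧ (f n).2 ≠ ⊥ ∧ (f n).1 ⊓ (f n).2 = ⊥ ∧
      (f (n + 1)).1 ≤ (f n).2 ∧ (f (n + 1)).2 ≤ (f n).2 := by
    intro n
    induction n with
    | zero =>
      obtain ⟨_, _, h1, h2, h3⟩ := Classical.choose_spec (hnonu ⊤ htop)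
      have hz2 : (f 0).2 ≠ ⊥ := h2
      obtain ⟨hs1, hs2, _, _, _⟩ := Classical.choose_spec (hnonu (f 0).2 hz2)
      exact ⟨h1, hz2, h3, by rw [hstep 0 hz2]; exact hs1, by rw [hstep 0 hz2]; exact hs2⟩
    | succ n ih =>
      obtain ⟨_, hn2, _, _, _⟩ := ih
      obtain ⟨_, _, ha3, ha4, ha5⟩ := Classical.choose_spec (hnonu (f n).2 hn2)
      have hz1 : (f (n + 1)).1 ≠ ⊥ := by rw [hstep n hn2]; exact ha3
      have hz2 : (f (n + 1)).2 ≠ ⊥ := by rw [hstep n hn2]; exact ha4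
      have hz3 : (f (n + 1)).1 ⊓ (f (n + 1)).2 = ⊥ := by rw [hstep n hn2]; exact ha5
      obtain ⟨hb1, hb2, _, _, _⟩ := Classical.choose_spec (hnonu (f (n + 1)).2 hz2)
      exact ⟨hz1, hz2, hz3, by rw [hstep (n + 1) hz2]; exact hb1,
        by rw [hstep (n + 1) hz2]; exact hb2⟩
  set D : ℕ → Submodule R ↥Q₀ := fun n => ⨆ i : Fin (n + 1), (f i).1 with hD
  have hDsucc : ∀ n, D (n + 1) = D n ⊔ (f (n + 1)).1 := by
    intro n
    show (⨆ i : Fin (n + 2), (f i).1) = (⨆ i : Fin (n + 1), (f i).1) ⊔ (f (n + 1)).1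
    rw [fin_iSup_last (fun i : Fin (n + 2) => (f i).1)]
    all_goals simp [Fin.coe_castSucc, Fin.val_last]
  have hD0 : D 0 = (f 0).1 := by
    apply le_antisymm
    · exact iSup_le fun i => by rw [Fin.fin_one_eq_zero i]; exact le_rfl
    · exact le_iSup (fun i : Fin 1 => (f i).1) 0
  have hDB : ∀ n, D n ⊓ (f n).2 = ⊥ := by
    intro n
    induction n with
    | zero => rw [hD0]; exact (hinv 0).2.2.1
    | succ n ih =>
      rw [hDsucc n, eq_bot_iff]
      intro x hx
      obtain ⟨hx1, hx2⟩ := Submodule.mem_inf.1 hx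
      obtain ⟨d, hd, a, ha, hda⟩ := Submodule.mem_sup.1 hx1
      have hd' : d ∈ D n ⊓ (f n).2 := by
        refine ⟨hd, ?_⟩
        have hxf : x ∈ (f n).2 := (hinv n).2.2.2.2 hx2
        have haf : a ∈ (f n).2 := (hinv n).2.2.2.1 ha
        have hdx : d = x - a := by rw [← hda]; abel
        rw [hdx]
        exact Submodule.sub_mem _ hxf haf
      rw [ih, Submodule.mem_bot] at hd'
      rw [hd', zero_add] at hda
      have : x ∈ (f (n + 1)).1 ⊓ (f (n + 1)).2 := ⟨hda ▸ ha, hx2⟩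
      rw [(hinv (n + 1)).2.2.1] at this
      exact this
  have hmono : Monotone D := monotone_nat_of_le_succ fun n => by
    rw [hDsucc n]; exact le_sup_left
  obtain ⟨n₀, hn₀⟩ := monotone_stabilizes_iff_noetherian.2 hnoe ⟨D, hmono⟩
  have heq : D n₀ = D (n₀ + 1) := hn₀ (n₀ + 1) (Nat.le_succ n₀)
  have hle : (f (n₀ + 1)).1 ≤ D n₀ := by
    rw [heq, hDsucc n₀]; exact le_sup_right
  have : (f (n₀ + 1)).1 ≤ D n₀ ⊓ (f n₀).2 := le_inf hle (hinv n₀).2.2.2.1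
  rw [hDB n₀, le_bot_iff] at this
  exact (hinv (n₀ + 1)).1 this

set_option maxHeartbeats 1000000 in
/-- Lemma B: a module of finite couniserial dimension is not isomorphic to any
non-essential submodule of itself. -/
theorem bLemma : ∀ (n : ℕ) {M : Type v} [AddCommGroup M] [Module R M],
    HasCUDim R M → cuDim R M ≤ (n : Ordinal.{v}) →
    ∀ (N K₀ : Submodule R M), K₀ ≠ ⊥ → N ⊓ K₀ = ⊥ → (↥N ≃ₗ[R] M) → False := by
  intro n
  induction n using Nat.strong_induction_on with
  | _ n IH =>
  intro M _ _ hcu hle N K₀ hK₀ne hNK φ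
  have hns : ¬ Subsingleton M := fun hs => hK₀ne (eq_bot_of_subsingleton' hs K₀)
  obtain ⟨K, hKK₀, hKne, hKunif⟩ := exists_unifIn hcu K₀ hK₀ne
  have hNK' : N ⊓ K = ⊥ := le_bot_iff.1 ((inf_le_inf_left N hKK₀).trans hNK.le)
  have hMnt : Nontrivial M := not_subsingleton_iff_nontrivial.1 hns
  have hNne : N ≠ ⊥ := by
    refine Submodule.nontrivial_iff_ne_bot.1 ?_
    obtain ⟨x, y, hxy⟩ := hMnt
    exact ⟨φ.symm x, φ.symm y, fun h => hxy (φ.symm.injective h)⟩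
  have hMnotu : ¬ IsUniformModule R M := fun hu => hu.2 N K hNne hKne hNK'
  have hζ := zeta_cuDim hcu hns
  have hζ' := hζ
  rw [ModuleZeta] at hζ'
  rcases hζ' with ⟨_, hu⟩ | ⟨hα1, hcl⟩
  · exact hMnotu hu
  -- the injective endomorphism with range N
  set e : M →ₗ[R] M := N.subtype.comp φ.symm.toLinearMap with he
  have hei : Function.Injective ⇑e := by
    rw [he, LinearMap.coe_comp]
    exact Subtype.val_injective.comp φ.symm.injective
  have hrange : LinearMap.range e = N := by
    rw [he, LinearMap.range_comp, LinearEquiv.range, Submodule.map_subtype_top]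
  set Kj : ℕ → Submodule R M := fun j => Submodule.map (e ^ j) K with hKjdef
  set Nj : ℕ → Submodule R M := fun j => LinearMap.range (e ^ j) with hNjdef
  have hepow : ∀ j, Function.Injective ⇑(e ^ j) := fun j => by
    rw [Module.End.coe_pow]; exact hei.iterate j
  have hNjsucc : ∀ j, Nj (j + 1) = Submodule.map e (Nj j) := fun j => by
    show LinearMap.range (e ^ (j + 1)) = _
    rw [pow_succ', Module.End.mul_eq_comp, LinearMap.range_comp]
  have hNjsucc' : ∀ j, Nj (j + 1) = Submodule.map (e ^ j) N := fun j => by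
    show LinearMap.range (e ^ (j + 1)) = _
    rw [pow_succ, Module.End.mul_eq_comp, LinearMap.range_comp, hrange]
  have hNj1 : Nj 1 = N := by
    show LinearMap.range (e ^ 1) = N
    rw [pow_one]; exact hrange
  have hNjdec : ∀ j, Nj (j + 1) ≤ Nj j := fun j => by
    rw [hNjsucc' j]; exact LinearMap.map_le_range
  have hNjanti : Antitone Nj := antitone_nat_of_succ_le hNjdec
  have hNjleN : ∀ j, Nj (j + 1) ≤ N := fun j => by
    rw [hNjsucc j]
    exact LinearMap.map_le_range.trans (le_of_eq hrange)
  have hKjsucc : ∀ j, Kj (j + 1) = Submodule.map e (Kj j) := fun j => by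
    show Submodule.map (e ^ (j + 1)) K = _
    rw [pow_succ', Module.End.mul_eq_comp, Submodule.map_comp]
  have hKj0 : Kj 0 = K := by
    show Submodule.map (e ^ 0) K = K
    rw [pow_zero, Module.End.one_eq_id, Submodule.map_id]
  have hKjle : ∀ j, Kj j ≤ Nj j := fun j => LinearMap.map_le_range
  have hKjne : ∀ j, Kj j ≠ ⊥ := fun j h => hKne ((map_eq_bot_iff' _ (hepow j) _).1 h)
  have hKjunif : ∀ j, UnifIn (Kj j) := fun j => unifIn_map _ (hepow j) hKunif
  have hKNj : ∀ j, Kj j ⊓ Nj (j + 1) = ⊥ := fun j => by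
    rw [hNjsucc' j]
    show Submodule.map (e ^ j) K ⊓ _ = ⊥
    rw [← Submodule.map_inf _ (hepow j), inf_comm K N, hNK', Submodule.map_bot]
  set Z : ℕ → Submodule R M := fun t => ⨆ i : Fin t, Kj ↑i with hZdef
  have hZmono : ∀ s t : ℕ, s ≤ t → Z s ≤ Z t := fun s t h =>
    iSup_le fun i => le_iSup (fun i' : Fin t => Kj ↑i') ⟨↑i, lt_of_lt_of_le i.isLt h⟩
  have hZsucc : ∀ t, Z (t + 1) = Kj 0 ⊔ Submodule.map e (Z t) := by
    intro t
    have h2 : Submodule.map e (Z t) = ⨆ i : Fin t, Kj ↑(i.succ) := by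
      show Submodule.map e (⨆ i : Fin t, Kj ↑i) = _
      rw [Submodule.map_iSup]
      exact iSup_congr fun i => by rw [Fin.val_succ]; exact (hKjsucc ↑i).symm
    show (⨆ i : Fin (t + 1), Kj ↑i) = _
    rw [fin_iSup_succ (fun i : Fin (t + 1) => Kj ↑i), ← h2]
    rfl
  have hZle : ∀ t, Z t ≤ ⊤ := fun t => le_top
  have hKjZ : ∀ (t : ℕ) (i : Fin t), Kj ↑i ≤ Z t := fun t i =>
    le_iSup (fun i' : Fin t => Kj ↑i') i
  have hZInv : ∀ t, Z t ⊓ Nj t = ⊥ := by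
    intro t
    induction t with
    | zero =>
      have hz : Z 0 = ⊥ := by
        show (⨆ i : Fin 0, Kj ↑i) = ⊥
        exact iSup_of_empty _
      rw [hz, bot_inf_eq]
    | succ t ih =>
      rw [hZsucc t, eq_bot_iff]
      intro x hx
      obtain ⟨hx1, hx2⟩ := Submodule.mem_inf.1 hx
      obtain ⟨kk, hkk, y, hy, hky⟩ := Submodule.mem_sup.1 hx1
      have hyN : y ∈ N := by
        have : Submodule.map e (Z t) ≤ N := LinearMap.map_le_range.trans (le_of_eq hrange)
        exact this hy
      have hxN : x ∈ N := hNjleN t hx2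
      have hkkN : kk ∈ N ⊓ K := by
        refine ⟨?_, by rw [← hKj0]; exact hkk⟩
        have : kk = x - y := by rw [← hky]; abel
        rw [this]; exact Submodule.sub_mem _ hxN hyN
      rw [hNK', Submodule.mem_bot] at hkkN
      rw [hkkN, zero_add] at hky
      have hxm : x ∈ Submodule.map e (Z t) ⊓ Submodule.map e (Nj t) := by
        refine ⟨hky ▸ hy, ?_⟩
        rw [← hNjsucc t]; exact hx2
      rw [← Submodule.map_inf _ hei, ih, Submodule.map_bot] at hxm
      exact hxm
  have hindep : ∀ t : ℕ, iSupIndep (fun i : Fin t => Kj ↑i) := by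
    intro t
    rw [iSupIndep_def]
    intro i
    rw [disjoint_iff]
    have hbound : (⨆ (j) (_ : j ≠ i), Kj ↑j) ≤ Z ↑i ⊔ Nj (↑i + 1) := by
      refine iSup₂_le fun j hj => ?_
      rcases lt_or_gt_of_ne (Fin.val_ne_of_ne hj) with hlt | hgt
      · exact le_sup_of_le_left (le_iSup (fun i' : Fin ↑i => Kj ↑i') ⟨↑j, hlt⟩)
      · exact le_sup_of_le_right ((hKjle ↑j).trans (hNjanti hgt))
    have hZN : Kj ↑i ⊓ (Z ↑i ⊔ Nj (↑i + 1)) = ⊥ := by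
      rw [eq_bot_iff]
      intro x hx
      obtain ⟨hxK, hxZN⟩ := Submodule.mem_inf.1 hx
      obtain ⟨a, ha, b, hb, hab⟩ := Submodule.mem_sup.1 hxZN
      have haZ : a ∈ Z ↑i ⊓ Nj ↑i := by
        refine ⟨ha, ?_⟩
        have hxNj : x ∈ Nj ↑i := hKjle ↑i hxK
        have hbNj : b ∈ Nj ↑i := hNjdec ↑i hb
        have : a = x - b := by rw [← hab]; abel
        rw [this]; exact Submodule.sub_mem _ hxNj hbNj
      rw [hZInv ↑i, Submodule.mem_bot] at haZ
      rw [haZ, zero_add] at hab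
      have : x ∈ Kj ↑i ⊓ Nj (↑i + 1) := ⟨hxK, hab ▸ hb⟩
      rw [hKNj ↑i] at this
      exact this
    exact le_bot_iff.1 ((inf_le_inf_left _ hbound).trans (le_of_eq hZN))
  have hZne : ∀ k, 1 ≤ k → Z k ≠ ⊥ := by
    intro k hk h0
    apply hKjne 0
    rw [← le_bot_iff, ← h0]
    exact le_iSup (fun i' : Fin k => Kj ↑i') ⟨0, hk⟩
  -- main existence of an isomorphic finite uniform join
  have hciso : ∃ k, 1 ≤ k ∧ Nonempty (↥(Z k) ≃ₗ[R] M) := by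
    by_contra hno
    push_neg at hno
    have hγ : ∀ k, 1 ≤ k → cuDim R ↥(Z k) < cuDim R M ∧ HasCUDim R ↥(Z k) := by
      intro k hk
      obtain ⟨β, hβ, hζβ⟩ := hcl (Z k) (hZne k hk) (by
        intro ⟨g⟩
        exact (hno k hk).false g)
      exact ⟨lt_of_le_of_lt (cuDim_le_of_zeta hζβ) hβ, ⟨β, hζβ⟩⟩
    have hZknt : ∀ k, 1 ≤ k → ¬ Subsingleton ↥(Z k) := fun k hk =>
      not_subsingleton_iff_nontrivial.2 (Submodule.nontrivial_iff_ne_bot.2 (hZne k hk))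
    have hstrict : ∀ k, 1 ≤ k → cuDim R ↥(Z k) < cuDim R ↥(Z (k + 1)) := by
      intro k hk
      have hXcu : HasCUDim R ↥(Z (k + 1)) := (hγ (k + 1) (by omega)).2
      have hXlt : cuDim R ↥(Z (k + 1)) < cuDim R M := (hγ (k + 1) (by omega)).1
      obtain ⟨m, hm⟩ := Ordinal.lt_omega0.1
        (lt_of_lt_of_le (lt_of_lt_of_le hXlt hle) (Ordinal.nat_lt_omega0 n).le)
      have hmn : m < n := by
        have : (m : Ordinal.{v}) < (n : Ordinal.{v}) := hm ▸ lt_of_lt_of_le hXlt hle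
        exact_mod_cast this
      -- submodule data inside Z (k+1)
      have hY : Submodule.map e (Z k) ≤ Z (k + 1) := by
        rw [hZsucc k]; exact le_sup_right
      have hK0Z : Kj 0 ≤ Z (k + 1) := hKjZ (k + 1) ⟨0, by omega⟩
      have hK1Z : Kj 1 ≤ Z (k + 1) := hKjZ (k + 1) ⟨1, by omega⟩
      have hYK : Submodule.map e (Z k) ⊓ Kj 0 = ⊥ := by
        rw [eq_bot_iff, ← hNK']
        refine le_inf ?_ ?_
        · exact inf_le_left.trans (LinearMap.map_le_range.trans (le_of_eq hrange))
        · rw [hKj0] at *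
          exact inf_le_right
      have hYiso : (↥(Submodule.map e (Z k))) ≃ₗ[R] ↥(Z k) :=
        (Submodule.equivMapOfInjective e hei (Z k)).symm
      have hnotiso : ¬ Nonempty (↥(Z k) ≃ₗ[R] ↥(Z (k + 1))) := by
        rintro ⟨g⟩
        set X := Z (k + 1)
        set N' := Submodule.comap X.subtype (Submodule.map e (Z k)) with hN'
        set K' := Submodule.comap X.subtype (Kj 0) with hK'
        have hK'ne : K' ≠ ⊥ := by
          intro h0
          apply hKjne 0
          have : Submodule.map X.subtype K' = Kj 0 := by
            rw [hK', Submodule.map_comap_subtype, inf_eq_right.2 hK0Z]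
          rw [← this, h0, Submodule.map_bot]
        have hNK'bot : N' ⊓ K' = ⊥ := by
          rw [hN', hK', ← Submodule.comap_inf, hYK, Submodule.comap_bot,
            Submodule.ker_subtype]
        have hiso : (↥N') ≃ₗ[R] ↥X :=
          ((Submodule.comapSubtypeEquivOfLe hY).trans hYiso).trans g
        exact IH m hmn hXcu (le_of_eq hm) N' K' hK'ne hNK'bot hiso
      -- now conclude strict increase
      have hζX := zeta_cuDim hXcu (hZknt (k + 1) (by omega))
      rw [ModuleZeta] at hζX
      rcases hζX with ⟨_, huX⟩ | ⟨_, hclX⟩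
      · -- Z (k+1) uniform: impossible, contains Kj 0 and Kj 1 disjointly
        exfalso
        set X := Z (k + 1)
        have hA : Submodule.comap X.subtype (Kj 0) ≠ ⊥ := by
          intro h0
          apply hKjne 0
          have : Submodule.map X.subtype (Submodule.comap X.subtype (Kj 0)) = Kj 0 := by
            rw [Submodule.map_comap_subtype, inf_eq_right.2 hK0Z]
          rw [← this, h0, Submodule.map_bot]
        have hB : Submodule.comap X.subtype (Kj 1) ≠ ⊥ := by
          intro h0
          apply hKjne 1
          have : Submodule.map X.subtype (Submodule.comap X.subtype (Kj 1)) = Kj 1 := by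
            rw [Submodule.map_comap_subtype, inf_eq_right.2 hK1Z]
          rw [← this, h0, Submodule.map_bot]
        have hAB : Submodule.comap X.subtype (Kj 0) ⊓ Submodule.comap X.subtype (Kj 1) = ⊥ := by
          rw [← Submodule.comap_inf]
          have h01 : Kj 0 ⊓ Kj 1 = ⊥ := by
            rw [eq_bot_iff, ← hKNj 0]
            exact inf_le_inf_left _ ((hKjle 1).trans (le_of_eq rfl))
          rw [h01, Submodule.comap_bot, Submodule.ker_subtype]
        exact huX.2 _ _ hA hB hAB
      · -- clause case
        have hZZ : Z k ≤ Z (k + 1) := hZmono k (k + 1) (by omega)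
        have hZk' : Submodule.comap (Z (k + 1)).subtype (Z k) ≠ ⊥ := by
          intro h0
          apply hZne k hk
          have : Submodule.map (Z (k + 1)).subtype
              (Submodule.comap (Z (k + 1)).subtype (Z k)) = Z k := by
            rw [Submodule.map_comap_subtype, inf_eq_right.2 hZZ]
          rw [← this, h0, Submodule.map_bot]
        have hZkiso : (↥(Submodule.comap (Z (k + 1)).subtype (Z k))) ≃ₗ[R] ↥(Z k) :=
          Submodule.comapSubtypeEquivOfLe hZZ
        obtain ⟨β, hβ, hζβ⟩ := hclX (Submodule.comap (Z (k + 1)).subtype (Z k)) hZk'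
          (fun ⟨g⟩ => hnotiso ⟨hZkiso.symm.trans g⟩)
        calc cuDim R ↥(Z k) = cuDim R ↥(Submodule.comap (Z (k + 1)).subtype (Z k)) :=
              (cuDim_congr hZkiso).symm ▸ rfl
          _ ≤ β := cuDim_le_of_zeta hζβ
          _ < cuDim R ↥(Z (k + 1)) := hβ
    -- cuDim of Z k grows at least like k
    have hge : ∀ k : ℕ, 1 ≤ k → (k : Ordinal.{v}) ≤ cuDim R ↥(Z k) := by
      intro k
      induction k with
      | zero => intro h; omega
      | succ k ihk =>
        intro _
        by_cases hk1 : 1 ≤ k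
        · have h1 := hstrict k hk1
          have h2 := ihk hk1
          have h3 : (k : Ordinal.{v}) < cuDim R ↥(Z (k + 1)) := lt_of_le_of_lt h2 h1
          have h4 : (k : Ordinal.{v}) + 1 ≤ cuDim R ↥(Z (k + 1)) := Order.add_one_le_iff.2 h3
          calc ((k + 1 : ℕ) : Ordinal.{v}) = (k : Ordinal.{v}) + 1 := by push_cast; rfl
            _ ≤ cuDim R ↥(Z (k + 1)) := h4
        · have hk0 : k = 0 := by omega
          subst hk0
          have h5 := one_le_cuDim (hγ 1 le_rfl).2 (hZknt 1 le_rfl)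
          simpa using h5
    have hcontr := hge (n + 1) (by omega)
    have hlt := (hγ (n + 1) (by omega)).1
    have : ((n + 1 : ℕ) : Ordinal.{v}) < ((n : ℕ) : Ordinal.{v}) :=
      lt_of_le_of_lt hcontr (lt_of_lt_of_le hlt hle)
    have : n + 1 < n := by exact_mod_cast this
    omega
  -- final step : use the Goldie bound
  obtain ⟨k, hk1, ⟨ψ⟩⟩ := hciso
  set X := Z k with hX
  set U' : Fin k → Submodule R ↥X := fun i => Submodule.comap X.subtype (Kj ↑i) with hU'
  have hKjX : ∀ i : Fin k, Kj ↑i ≤ X := hKjZ k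
  have hU'unif : ∀ i, UnifIn (U' i) := fun i => unifIn_comap_subtype (hKjX i) (hKjunif ↑i)
  have hU'ind : iSupIndep U' := iSupIndep_comap_subtype (hindep k)
  have hU'top : (⨆ i, U' i) = ⊤ := by
    apply Submodule.map_injective_of_injective (f := X.subtype) Subtype.val_injective
    rw [Submodule.map_iSup, Submodule.map_subtype_top]
    have : ∀ i : Fin k, Submodule.map X.subtype (U' i) = Kj ↑i := fun i => by
      rw [hU', Submodule.map_comap_subtype, inf_eq_right.2 (hKjX i)]
    rw [iSup_congr this]
  set V : Fin (k + 1) → Submodule R ↥X := fun i => Submodule.map ψ.symm.toLinearMap (Kj ↑i)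
    with hV
  have hVne : ∀ i, V i ≠ ⊥ := fun i h =>
    hKjne ↑i ((map_eq_bot_iff' ψ.symm.toLinearMap ψ.symm.injective _).1 h)
  have hVind : iSupIndep V := iSupIndep_map ψ.symm.toLinearMap ψ.symm.injective
    (hindep (k + 1))
  refine goldie_bound k ⊤ U' (fun i => le_top) hU'ind hU'unif ?_ V (fun i => le_top) hVind hVne
  rw [hU'top]
  exact EssIn.refl ⊤

set_option maxHeartbeats 1000000 in
theorem mainLemma : ∀ (n : ℕ) {M : Type v} [AddCommGroup M] [Module R M],
    HasCUDim R M → cuDim R M ≤ (n : Ordinal.{v}) →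
    ∃ m : ℕ, m ≤ n ∧ HasFiniteUniformDim R M m := by
  intro n
  induction n using Nat.strong_induction_on with
  | _ n IH =>
  intro M _ _ hcu hle
  by_cases hss : Subsingleton M
  · refine ⟨0, Nat.zero_le n, Fin.elim0, iSupIndep_def.2 fun i => i.elim0,
      fun i => i.elim0, fun K hK => absurd (eq_bot_of_subsingleton' hss K) hK⟩
  have hζ := zeta_cuDim hcu hss
  have hnt : Nontrivial M := not_subsingleton_iff_nontrivial.1 hss
  have h1n : 1 ≤ n := by
    have h1 := (one_le_cuDim hcu hss).trans hle
    by_contra hcn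
    have hn0 : n = 0 := by omega
    rw [hn0] at h1
    simp at h1
  by_cases huni : IsUniformModule R M
  · refine ⟨1, h1n, fun _ => ⊤, ?_, ?_, ?_⟩
    · rw [iSupIndep_def]
      intro i
      have hbot : (⨆ (j : Fin 1) (_ : j ≠ i), (⊤ : Submodule R M)) = ⊥ := by
        refine le_antisymm (iSup₂_le fun j hj => ?_) bot_le
        exact (hj (Subsingleton.elim j i)).elim
      rw [hbot]
      exact disjoint_bot_right
    · intro _
      exact isUniformModule_congr (Submodule.topEquiv).symm huni
    · intro K hK
      have hsup : (⨆ _ : Fin 1, (⊤ : Submodule R M)) = ⊤ := by simp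
      rw [hsup, top_inf_eq]
      exact hK
  · have hζ' := hζ
    rw [ModuleZeta] at hζ'
    rcases hζ' with ⟨_, hu⟩ | ⟨hα1, hcl⟩
    · exact absurd hu huni
    have hexists : ∃ A₀ B₀ : Submodule R M, A₀ ≠ ⊥ ∧ B₀ ≠ ⊥ ∧ A₀ ⊓ B₀ = ⊥ := by
      unfold IsUniformModule at huni
      rw [not_and] at huni
      have h6 := huni hnt
      push_neg at h6
      obtain ⟨A₀, B₀, hA₀, hB₀, hAB⟩ := h6
      exact ⟨A₀, B₀, hA₀, hB₀, hAB⟩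
    obtain ⟨A₀, B₀, hA₀ne, hB₀ne, hA₀B₀⟩ := hexists
    obtain ⟨A, hAA₀, hAne, hAunif⟩ := exists_unifIn hcu A₀ hA₀ne
    have hAB₀ : A ⊓ B₀ = ⊥ := le_bot_iff.1 ((inf_le_inf_right B₀ hAA₀).trans hA₀B₀.le)
    obtain ⟨C, hB₀C, hCle, hAC, hEss⟩ := exists_compl_within (le_top : A ≤ ⊤) le_top hAB₀
    have hCne : C ≠ ⊥ := fun h => hB₀ne (le_bot_iff.1 (h ▸ hB₀C))
    have hCiso : ¬ Nonempty (↥C ≃ₗ[R] M) := fun ⟨g⟩ =>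
      bLemma n hcu hle C A hAne (by rw [inf_comm]; exact hAC) g
    obtain ⟨β, hβ, hζC⟩ := hcl C hCne hCiso
    have hCcu : HasCUDim R ↥C := ⟨β, hζC⟩
    have hCled : cuDim R ↥C ≤ ((n - 1 : ℕ) : Ordinal.{v}) := by
      have h2 : cuDim R ↥C < ((n : ℕ) : Ordinal.{v}) :=
        lt_of_le_of_lt (cuDim_le_of_zeta hζC) (lt_of_lt_of_le hβ hle)
      have h3 : ((n : ℕ) : Ordinal.{v}) = ((n - 1 : ℕ) : Ordinal.{v}) + 1 := by
        have : n = (n - 1) + 1 := by omega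
        rw [this]
        push_cast
        simp
      rw [h3, Ordinal.add_one_eq_succ] at h2
      exact Order.lt_succ_iff.1 h2
    obtain ⟨m₂, hm₂le, V, hVind, hVunif, hVess⟩ := IH (n - 1) (by omega) hCcu hCled
    set V' : Fin m₂ → Submodule R M := fun i => Submodule.map C.subtype (V i) with hV'
    have hV'le : ∀ i, V' i ≤ C := fun i => Submodule.map_subtype_le C (V i)
    have hV'unif : ∀ i, UnifIn (V' i) := fun i =>
      unifIn_map C.subtype Subtype.val_injective ((unifIn_iff (V i)).1 (hVunif i))
    have hV'ind : iSupIndep V' := iSupIndep_map C.subtype Subtype.val_injective hVind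
    have hV'ess : EssIn (⨆ i, V' i) C := by
      have h7 : (⨆ i, V' i) = Submodule.map C.subtype (⨆ i, V i) := by
        rw [Submodule.map_iSup]
      rw [h7]
      exact essIn_map_subtype hVess
    have hsupC : (⨆ i, V' i) ≤ C := iSup_le hV'le
    set W : Fin (m₂ + 1) → Submodule R M := Fin.cons A V' with hW
    have hW0 : W 0 = A := rfl
    have hWs : ∀ j : Fin m₂, W j.succ = V' j := fun j => rfl
    refine ⟨m₂ + 1, by omega, W, ?_, ?_, ?_⟩
    · rw [iSupIndep_def]
      intro i
      induction i using Fin.cases with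
      | zero =>
        rw [disjoint_iff]
        have hbd : (⨆ (j) (_ : j ≠ (0 : Fin (m₂ + 1))), W j) ≤ C := by
          refine iSup₂_le fun j hj => ?_
          obtain ⟨j', rfl⟩ := Fin.eq_succ_of_ne_zero hj
          rw [hWs j']
          exact hV'le j'
        refine le_bot_iff.1 ?_
        have h8 := inf_le_inf_left (W 0) hbd
        rw [hW0] at h8
        exact h8.trans (le_of_eq hAC)
      | succ i' =>
        rw [disjoint_iff]
        have hbd : (⨆ (j) (_ : j ≠ i'.succ), W j)
            ≤ A ⊔ ⨆ (j) (_ : j ≠ i'), V' j := by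
          refine iSup₂_le fun j hj => ?_
          induction j using Fin.cases with
          | zero => rw [hW0]; exact le_sup_left
          | succ j' =>
            rw [hWs j']
            have hj' : j' ≠ i' := fun h => hj (by rw [h])
            refine le_sup_of_le_right ?_
            exact le_iSup₂_of_le j' hj' le_rfl
        refine le_bot_iff.1 ((inf_le_inf_left _ hbd).trans ?_)
        rw [hWs i']
        intro x hx
        obtain ⟨hx1, hx2⟩ := Submodule.mem_inf.1 hx
        obtain ⟨a, ha, s, hs, has⟩ := Submodule.mem_sup.1 hx2
        have hsC : s ∈ C := by
          have : (⨆ (j) (_ : j ≠ i'), V' j) ≤ C := iSup₂_le fun j _ => hV'le j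
          exact this hs
        have haAC : a ∈ A ⊓ C := by
          refine ⟨ha, ?_⟩
          have : a = x - s := by rw [← has]; abel
          rw [this]
          exact Submodule.sub_mem _ (hV'le i' hx1) hsC
        rw [hAC, Submodule.mem_bot] at haAC
        rw [haAC, zero_add] at has
        have hxm : x ∈ V' i' ⊓ (⨆ (j) (_ : j ≠ i'), V' j) := ⟨hx1, has ▸ hs⟩
        rw [disjoint_iff.1 (iSupIndep_def.1 hV'ind i')] at hxm
        exact hxm
    · intro i
      induction i using Fin.cases with
      | zero =>
        rw [hW0]
        exact (unifIn_iff A).2 hAunif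
      | succ j =>
        rw [hWs j]
        exact (unifIn_iff (V' j)).2 (hV'unif j)
    · have hsup : (⨆ i, W i) = A ⊔ ⨆ i, V' i := by
        rw [fin_iSup_succ W, hW0]
        congr 1
      have hEssTot : EssIn (A ⊔ ⨆ i, V' i) ⊤ :=
        (essIn_sup_sup (EssIn.refl A) hV'ess hAC).trans hEss
      intro K hK
      rw [hsup]
      exact hEssTot.2 K le_top hK

end CU

/-- A module of finite couniserial dimension `n` has finite uniform dimension
`m ≤ n`. -/
theorem stmt3 (R : Type u) [Ring R] (M : Type v) [AddCommGroup M] [Module R M] (n : ℕ)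
    (h : HasCUDim R M) (hn : cuDim R M = (n : Ordinal.{v})) :
    ∃ m : ℕ, m ≤ n ∧ HasFiniteUniformDim R M m :=
  CU.mainLemma n h (le_of_eq hn)
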